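/- Let L ≥ 1 be an integer, r > 1 and 0 < x < 1 real numbers, ε : {1,…,L+1} → {0,1} any map, and m ≥ 1 an integer. For 1 ≤ j ≤ L set σ_j = −1 if ε_j ≠ ε_{j+1}, σ_j = −[m]_x [2(r−1)m]_x/([rm]_x [(r−1)m]_x) if ε_j = ε_{j+1} = 1, and σ_j = −[(r−1)m]_x [2m]_x/([rm]_x [m]_x) if ε_j = ε_{j+1} = 0; and for 2 ≤ j ≤ L set γ_j = [m]_x if ε_j = 1 and γ_j = [(r−1)m]_x if ε_j = 0. Let A(m) be the L×L real tridiagonal matrix with A_{k,k}(m) = 1 (1 ≤ k ≤ L), A_{j−1,j}(m) = γ_j/([rm]_x · σ_j) and A_{j,j−1}(m) = γ_j/([rm]_x · σ_{j−1}) for 2 ≤ j ≤ L, and all other entries 0. Set n₊ = #{1 ≤ j ≤ L+1 : ε_j = 1}, n₋ = #{1 ≤ j ≤ L+1 : ε_j = 0}, and a = (r−1)n₊ + n₋. Then det A(m) = (−1)^L · [a m]_x [(r−1)m]_x^{n₋−1} [m]_x^{n₊−1} / ([rm]_x^{L} · ∏_{j=1}^{L} σ_j); in particular det A(m) ≠ 0.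 Moreover the corresponding matrix A(−m) is the transpose of A(m), so the same formula holds for all nonzero integers m. (This is the m ≠ 0 case of Lemma 3.12, with the explicit values s_j(m) = 1 and s_j(−m) = σ_j from Theorem 3.1.) -/

import Mathlib

/-- The q-integer `[n]_x = (x^n - x^{-n})/(x - x^{-1})`, with real powers of `x`. -/
noncomputable def qint (x n : ℝ) : ℝ := (x ^ n - x ^ (-n)) / (x - x⁻¹)

/-- The quantity `σ_j = s_j(-m)` from Theorem 3.1 (1-based index `j`). -/
noncomputable def sigmaj (x r : ℝ) (m : ℝ) (ε : ℕ → Bool) (j : ℕ) : ℝ :=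
  if ε j ≠ ε (j + 1) then -1
  else if ε (j + 1) then
    -(qint x m * qint x (2 * (r - 1) * m)) / (qint x (r * m) * qint x ((r - 1) * m))
  else -(qint x ((r - 1) * m) * qint x (2 * m)) / (qint x (r * m) * qint x m)

/-- The quantity `γ_j`: `[m]_x` if `ε_j = 1` and `[(r-1)m]_x` if `ε_j = 0`. -/
noncomputable def gamj (x r : ℝ) (m : ℝ) (ε : ℕ → Bool) (j : ℕ) : ℝ :=
  if ε j then qint x m else qint x ((r - 1) * m)

/-- The entry `A_{k,l}(m)` (1-based indices) of the tridiagonal matrix `A(m)`, `m > 0`: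
`A_{k,k}(m) = 1`, `A_{j-1,j}(m) = γ_j/([rm]_x σ_j)`, `A_{j,j-1}(m) = γ_j/([rm]_x σ_{j-1})`. -/
noncomputable def Ament (x r : ℝ) (m : ℝ) (ε : ℕ → Bool) (k l : ℕ) : ℝ :=
  if k = l then 1
  else if l = k + 1 then gamj x r m ε l / (qint x (r * m) * sigmaj x r m ε l)
  else if k = l + 1 then gamj x r m ε k / (qint x (r * m) * sigmaj x r m ε l)
  else 0

/-- The `L × L` matrix `(A_{i,j}(m))_{i,j=1}^L`. -/
noncomputable def matAm (L : ℕ) (x r : ℝ) (m : ℝ) (ε : ℕ → Bool) : Matrix (Fin L) (Fin L) ℝ :=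
  Matrix.of fun k l => Ament x r m ε ((k : ℕ) + 1) ((l : ℕ) + 1)

/-- The number `n₊ = #{1 ≤ j ≤ L+1 : ε_j = 1}`. -/
def nPlus (L : ℕ) (ε : ℕ → Bool) : ℕ :=
  ((Finset.Icc 1 (L + 1)).filter fun j => ε j = true).card

/-- The number `n₋ = #{1 ≤ j ≤ L+1 : ε_j = 0}`. -/
def nMinus (L : ℕ) (ε : ℕ → Bool) : ℕ :=
  ((Finset.Icc 1 (L + 1)).filter fun j => ε j = false).card

/-- The claimed value of `det A(m)` in Lemma 3.12 (`m ≠ 0` case), with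
`a = (r-1)n₊ + n₋`. -/
noncomputable def detVal (L : ℕ) (x r : ℝ) (m : ℝ) (ε : ℕ → Bool) : ℝ :=
  (-1 : ℝ) ^ L * qint x (((r - 1) * (nPlus L ε : ℝ) + (nMinus L ε : ℝ)) * m) *
      qint x ((r - 1) * m) ^ ((nMinus L ε : ℤ) - 1) * qint x m ^ ((nPlus L ε : ℤ) - 1) /
    (qint x (r * m) ^ L * ∏ j ∈ Finset.Icc 1 L, sigmaj x r m ε j)

lemma qint_pos {x : ℝ} (hx0 : 0 < x) (hx1 : x < 1) {t : ℝ} (ht : 0 < t) : 0 < qint x t := by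
  unfold qint
  apply div_pos_of_neg_of_neg
  · have h1 : x ^ t < x ^ (-t) :=
      Real.rpow_lt_rpow_of_exponent_gt hx0 hx1 (by linarith)
    linarith
  · have : 1 < x⁻¹ := (one_lt_inv₀ hx0).mpr hx1
    linarith

lemma qint_add3 {x : ℝ} (hx0 : 0 < x) (hx1 : x < 1) (b c d : ℝ) :
    qint x (b + c + d) * qint x c + qint x d * qint x b = qint x (c + d) * qint x (b + c) := by
  have hxne : x ≠ 0 := ne_of_gt hx0
  have hden : x - x⁻¹ ≠ 0 := by
    have : 1 < x⁻¹ := (one_lt_inv₀ hx0).mpr hx1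
    nlinarith
  have hb := (Real.rpow_pos_of_pos hx0 b).ne'
  have hc := (Real.rpow_pos_of_pos hx0 c).ne'
  have hd := (Real.rpow_pos_of_pos hx0 d).ne'
  have e1 : ∀ u v w : ℝ, qint x (u + v + w)
      = (x^u * x^v * x^w - (x^u * x^v * x^w)⁻¹) / (x - x⁻¹) := by
    intro u v w
    unfold qint
    rw [Real.rpow_neg hx0.le, Real.rpow_add hx0, Real.rpow_add hx0]
  have e2 : ∀ u v : ℝ, qint x (u + v) = (x^u * x^v - (x^u * x^v)⁻¹) / (x - x⁻¹) := by
    intro u v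
    unfold qint
    rw [Real.rpow_neg hx0.le, Real.rpow_add hx0]
  have e3 : ∀ u : ℝ, qint x u = (x^u - (x^u)⁻¹) / (x - x⁻¹) := by
    intro u
    unfold qint
    rw [Real.rpow_neg hx0.le]
  rw [e1, e2 c d, e2 b c, e3 b, e3 c, e3 d]
  rw [div_mul_div_comm, div_mul_div_comm, div_mul_div_comm, ← add_div]
  congr 1
  field_simp
  ring

/-- numerator function -/
noncomputable def Fq (x r mR : ℝ) (ε : ℕ → Bool) (k : ℕ) : ℝ :=
  (-1 : ℝ) ^ k * qint x (((r - 1) * (nPlus k ε : ℝ) + (nMinus k ε : ℝ)) * mR) *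
    qint x ((r - 1) * mR) ^ ((nMinus k ε : ℤ) - 1) * qint x mR ^ ((nPlus k ε : ℤ) - 1)

lemma icc_succ (k : ℕ) : Finset.Icc 1 (k + 2) = insert (k + 2) (Finset.Icc 1 (k + 1)) := by
  ext a; simp only [Finset.mem_Icc, Finset.mem_insert]; omega

lemma nPlus_succ (ε : ℕ → Bool) (k : ℕ) :
    nPlus (k + 1) ε = nPlus k ε + (if ε (k + 2) then 1 else 0) := by
  unfold nPlus
  rw [show k + 1 + 1 = k + 2 from rfl, icc_succ, Finset.filter_insert]
  by_cases h : ε (k + 2)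
  · rw [if_pos (by simp [h]), Finset.card_insert_of_notMem (by simp), if_pos h]
  · rw [if_neg (by simp [h]), if_neg h]; simp

lemma nMinus_succ (ε : ℕ → Bool) (k : ℕ) :
    nMinus (k + 1) ε = nMinus k ε + (if ε (k + 2) then 0 else 1) := by
  unfold nMinus
  rw [show k + 1 + 1 = k + 2 from rfl, icc_succ, Finset.filter_insert]
  by_cases h : ε (k + 2)
  · rw [if_neg (by simp [h]), if_pos h]; simp
  · rw [if_pos (by simp [h]), Finset.card_insert_of_notMem (by simp), if_neg h]

lemma nPlus_add_nMinus (ε : ℕ → Bool) (k : ℕ) : nPlus k ε + nMinus k ε = k + 1 := by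
  unfold nPlus nMinus
  rw [show ((Finset.Icc 1 (k+1)).filter fun j => ε j = false)
      = ((Finset.Icc 1 (k+1)).filter fun j => ¬ (ε j = true)) by simp]
  rw [Finset.card_filter_add_card_filter_not]
  simp

lemma zrew {a : ℝ} (ha : a ≠ 0) (n : ℕ) : a ^ ((n : ℤ) - 1) = a ^ n / a := by
  rw [zpow_sub₀ ha, zpow_natCast, zpow_one]


lemma Frec (x r mR : ℝ) (hx0 : 0 < x) (hx1 : x < 1) (hr : 1 < r) (hm : 0 < mR)
    (ε : ℕ → Bool) (k : ℕ) :
    Fq x r mR ε (k + 2) = qint x (r * mR) * sigmaj x r mR ε (k + 2) * Fq x r mR ε (k + 1)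
      - (gamj x r mR ε (k + 2)) ^ 2 * Fq x r mR ε k := by
  have hqm : (0:ℝ) < qint x mR := qint_pos hx0 hx1 hm
  have hqr1 : (0:ℝ) < qint x ((r - 1) * mR) := qint_pos hx0 hx1 (by nlinarith)
  have hqr : (0:ℝ) < qint x (r * mR) := qint_pos hx0 hx1 (by nlinarith)
  cases hε2 : ε (k + 2) <;> cases hε3 : ε (k + 3)
  · -- FF
    simp only [Fq, show k+1+1 = k+2 from rfl, nPlus_succ, nMinus_succ,
      show k+1+2 = k+3 from rfl, hε2, hε3, if_true, if_false,
      sigmaj, gamj, show k+2+1 = k+3 from rfl, ne_eq, add_zero]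
    simp only [zrew hqm.ne', zrew hqr1.ne']
    push_cast
    simp only [add_zero, not_true, if_false, Bool.false_eq_true]
    have key := qint_add3 hx0 hx1 (((r-1)*(nPlus k ε : ℝ) + (nMinus k ε : ℝ))*mR) mR mR
    rw [show (((r-1)*(nPlus k ε : ℝ) + (nMinus k ε : ℝ))*mR) + mR + mR
          = ((r - 1) * (nPlus k ε : ℝ) + ((nMinus k ε : ℝ) + 1 + 1)) * mR by ring,
        show (((r-1)*(nPlus k ε : ℝ) + (nMinus k ε : ℝ))*mR) + mR
          = ((r - 1) * (nPlus k ε : ℝ) + ((nMinus k ε : ℝ) + 1)) * mR by ring,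
        show mR + mR = 2*mR by ring] at key
    field_simp
    rw [show mR * 2 = 2 * mR by ring, mul_comm mR ((r-1)*(nPlus k ε : ℝ) + ((nMinus k ε : ℝ)+1)), mul_comm mR ((r-1)*(nPlus k ε : ℝ) + (nMinus k ε : ℝ))]
    linear_combination ((-1:ℝ)^k * qint x ((r-1)*mR)^(nMinus k ε + 2)) * key
  · -- FT
    simp only [Fq, show k+1+1 = k+2 from rfl, nPlus_succ, nMinus_succ,
      show k+1+2 = k+3 from rfl, hε2, hε3, if_true, if_false,
      sigmaj, gamj, show k+2+1 = k+3 from rfl, ne_eq, add_zero]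
    simp only [zrew hqm.ne', zrew hqr1.ne']
    push_cast
    simp only [add_zero, not_true, if_false, Bool.false_eq_true]
    have key := qint_add3 hx0 hx1 (((r-1)*(nPlus k ε : ℝ) + (nMinus k ε : ℝ))*mR) mR ((r-1)*mR)
    rw [show (((r-1)*(nPlus k ε : ℝ) + (nMinus k ε : ℝ))*mR) + mR + (r-1)*mR
          = ((r - 1) * ((nPlus k ε : ℝ) + 1) + ((nMinus k ε : ℝ) + 1)) * mR by ring,
        show (((r-1)*(nPlus k ε : ℝ) + (nMinus k ε : ℝ))*mR) + mR
          = ((r - 1) * (nPlus k ε : ℝ) + ((nMinus k ε : ℝ) + 1)) * mR by ring,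
        show mR + (r-1)*mR = r*mR by ring] at key
    field_simp
    simp only [not_false_eq_true, if_true]
    rw [mul_comm mR ((r-1)*(nPlus k ε : ℝ) + ((nMinus k ε : ℝ)+1)), mul_comm mR ((r-1)*(nPlus k ε : ℝ) + (nMinus k ε : ℝ))]
    linear_combination ((-1:ℝ)^k * qint x mR^(nPlus k ε) * qint x ((r-1)*mR)^(nMinus k ε + 1)) * key
  · -- TF
    simp only [Fq, show k+1+1 = k+2 from rfl, nPlus_succ, nMinus_succ,
      show k+1+2 = k+3 from rfl, hε2, hε3, if_true, if_false,
      sigmaj, gamj, show k+2+1 = k+3 from rfl, ne_eq, add_zero]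
    simp only [zrew hqm.ne', zrew hqr1.ne']
    push_cast
    simp only [add_zero, not_true, if_false, Bool.false_eq_true]
    have key := qint_add3 hx0 hx1 (((r-1)*(nPlus k ε : ℝ) + (nMinus k ε : ℝ))*mR) ((r-1)*mR) mR
    rw [show (((r-1)*(nPlus k ε : ℝ) + (nMinus k ε : ℝ))*mR) + (r-1)*mR + mR
          = ((r - 1) * ((nPlus k ε : ℝ) + 1) + ((nMinus k ε : ℝ) + 1)) * mR by ring,
        show (((r-1)*(nPlus k ε : ℝ) + (nMinus k ε : ℝ))*mR) + (r-1)*mR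
          = ((r - 1) * ((nPlus k ε : ℝ) + 1) + (nMinus k ε : ℝ)) * mR by ring,
        show (r-1)*mR + mR = r*mR by ring] at key
    field_simp
    simp only [not_false_eq_true, if_true]
    rw [mul_comm mR ((r-1)*((nPlus k ε : ℝ)+1) + (nMinus k ε : ℝ)), mul_comm mR ((r-1)*(nPlus k ε : ℝ) + (nMinus k ε : ℝ))]
    linear_combination ((-1:ℝ)^k * qint x ((r-1)*mR)^(nMinus k ε) * qint x mR^(nPlus k ε + 1)) * key
  · -- TT
    simp only [Fq, show k+1+1 = k+2 from rfl, nPlus_succ, nMinus_succ,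
      show k+1+2 = k+3 from rfl, hε2, hε3, if_true, if_false,
      sigmaj, gamj, show k+2+1 = k+3 from rfl, ne_eq]
    simp only [zrew hqm.ne', zrew hqr1.ne']
    push_cast
    simp only [add_zero, not_true, if_false]
    have key := qint_add3 hx0 hx1 (((r-1)*(nPlus k ε : ℝ) + (nMinus k ε : ℝ))*mR)
      ((r-1)*mR) ((r-1)*mR)
    rw [show (((r-1)*(nPlus k ε : ℝ) + (nMinus k ε : ℝ))*mR) + (r-1)*mR + (r-1)*mR
          = ((r - 1) * ((nPlus k ε : ℝ) + 1 + 1) + (nMinus k ε : ℝ)) * mR by ring,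
        show (((r-1)*(nPlus k ε : ℝ) + (nMinus k ε : ℝ))*mR) + (r-1)*mR
          = ((r - 1) * ((nPlus k ε : ℝ) + 1) + (nMinus k ε : ℝ)) * mR by ring,
        show (r-1)*mR + (r-1)*mR = 2*(r-1)*mR by ring] at key
    field_simp
    rw [show (r-1) * mR * 2 = 2 * (r-1) * mR by ring, mul_comm mR ((r-1)*((nPlus k ε : ℝ)+1) + (nMinus k ε : ℝ)), mul_comm mR ((r-1)*(nPlus k ε : ℝ) + (nMinus k ε : ℝ))]
    linear_combination ((-1:ℝ)^k * qint x mR^(nPlus k ε + 2)) * key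


lemma det_rec (e : ℕ → ℕ → ℝ) (h : ∀ k l, k + 2 ≤ l ∨ l + 2 ≤ k → e k l = 0) (n : ℕ) :
    (Matrix.of fun i j : Fin (n+2) => e (i+1) (j+1)).det =
      e (n+2) (n+2) * (Matrix.of fun i j : Fin (n+1) => e (i+1) (j+1)).det
      - e (n+1) (n+2) * e (n+2) (n+1) * (Matrix.of fun i j : Fin n => e (i+1) (j+1)).det := by
  rw [Matrix.det_succ_row _ (Fin.last (n+1))]
  rw [Fin.sum_univ_castSucc, Fin.sum_univ_castSucc]
  have hz : ∀ j : Fin n, ((-1:ℝ)) ^ ((Fin.last (n+1) : ℕ) + ((j.castSucc.castSucc : Fin (n+2)) : ℕ)) *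
      (Matrix.of fun i j : Fin (n+2) => e (i+1) (j+1)) (Fin.last (n+1)) j.castSucc.castSucc *
      ((Matrix.of fun i j : Fin (n+2) => e (i+1) (j+1)).submatrix (Fin.last (n+1)).succAbove
        (j.castSucc.castSucc).succAbove).det = 0 := by
    intro j
    have : e ((Fin.last (n+1) : ℕ) + 1) (((j.castSucc.castSucc : Fin (n+2)) : ℕ) + 1) = 0 := by
      apply h
      right
      simp only [Fin.val_last, Fin.coe_castSucc]
      omega
    simp only [Fin.val_last, Fin.coe_castSucc] at this ⊢
    simp [Matrix.of_apply, this]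
  rw [Finset.sum_congr rfl (fun j _ => hz j), Finset.sum_const_zero, zero_add]
  have e1 : (Fin.last (n+1)).succAbove = Fin.castSucc := Fin.succAbove_last
  rw [e1]
  have hsub2 : ((Matrix.of fun i j : Fin (n+2) => e (i+1) (j+1)).submatrix Fin.castSucc Fin.castSucc)
      = (Matrix.of fun i j : Fin (n+1) => e (i+1) (j+1)) := by
    ext i j; simp [Matrix.submatrix_apply]
  have hC : ((Matrix.of fun i j : Fin (n+2) => e (i+1) (j+1)).submatrix Fin.castSucc
      (Fin.last n).castSucc.succAbove).det
      = e (n+1) (n+2) * (Matrix.of fun i j : Fin n => e (i+1) (j+1)).det := by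
    rw [Matrix.det_succ_column _ (Fin.last n), Fin.sum_univ_castSucc]
    have hz2 : ∀ i : Fin n, ((-1:ℝ)) ^ (((i.castSucc : Fin (n+1)) : ℕ) + ((Fin.last n : Fin (n+1)) : ℕ)) *
        ((Matrix.of fun i j : Fin (n+2) => e (i+1) (j+1)).submatrix Fin.castSucc
          (Fin.last n).castSucc.succAbove) i.castSucc (Fin.last n) *
        (((Matrix.of fun i j : Fin (n+2) => e (i+1) (j+1)).submatrix Fin.castSucc
          (Fin.last n).castSucc.succAbove).submatrix i.castSucc.succAbove (Fin.last n).succAbove).det = 0 := by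
      intro i
      have hcol : (Fin.last n).castSucc.succAbove (Fin.last n) = (Fin.last n).succ :=
        Fin.succAbove_castSucc_self _
      have hval : e ((i.castSucc : ℕ) + 1) (((Fin.last n).succ : ℕ) + 1) = 0 := by
        apply h; left
        simp only [Fin.coe_castSucc, Fin.val_succ, Fin.val_last]
        omega
      simp only [Matrix.submatrix_apply, hcol, Matrix.of_apply]
      simp only [Fin.coe_castSucc, Fin.val_succ, Fin.val_last] at hval ⊢
      simp [hval]
    rw [Finset.sum_congr rfl (fun i _ => hz2 i), Finset.sum_const_zero, zero_add]
    have hcol : (Fin.last n).castSucc.succAbove (Fin.last n) = (Fin.last n).succ :=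
      Fin.succAbove_castSucc_self _
    have hsub3 : (((Matrix.of fun i j : Fin (n+2) => e (i+1) (j+1)).submatrix Fin.castSucc
        (Fin.last n).castSucc.succAbove).submatrix (Fin.last n).succAbove (Fin.last n).succAbove)
        = (Matrix.of fun i j : Fin n => e (i+1) (j+1)) := by
      ext i j
      have hcol' : (Fin.last n).castSucc.succAbove j.castSucc = j.castSucc.castSucc :=
        Fin.succAbove_castSucc_of_lt _ _ (Fin.castSucc_lt_last j)
      simp [Matrix.submatrix_apply, Fin.succAbove_last, hcol']
    rw [hsub3]
    simp only [Matrix.submatrix_apply, hcol, Matrix.of_apply, Fin.val_last, Fin.coe_castSucc,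
      Fin.val_succ]
    have hs : ((-1:ℝ)) ^ (n + n) = 1 := Even.neg_one_pow ⟨n, rfl⟩
    rw [hs]; ring
  rw [hsub2, hC]
  have hcol2 : (Fin.last n).castSucc.succAbove (Fin.last n) = (Fin.last n).succ :=
    Fin.succAbove_castSucc_self _
  simp only [Matrix.of_apply, Fin.val_last, Fin.coe_castSucc]
  have h1 : ((-1:ℝ))^(n+1+n) = -1 := Odd.neg_one_pow ⟨n, by ring⟩
  have h2 : ((-1:ℝ))^(n+1+(n+1)) = 1 := Even.neg_one_pow ⟨n+1, by ring⟩
  rw [h1, h2]; ring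


section Main
variable {x r mR : ℝ} {ε : ℕ → Bool}

lemma sigmaj_neg (hx0 : 0 < x) (hx1 : x < 1) (hr : 1 < r) (hm : 0 < mR) (j : ℕ) :
    sigmaj x r mR ε j < 0 := by
  have hqm : (0:ℝ) < qint x mR := qint_pos hx0 hx1 hm
  have hqr1 : (0:ℝ) < qint x ((r - 1) * mR) := qint_pos hx0 hx1 (by nlinarith)
  have hqr : (0:ℝ) < qint x (r * mR) := qint_pos hx0 hx1 (by nlinarith)
  have hq2m : (0:ℝ) < qint x (2 * mR) := qint_pos hx0 hx1 (by nlinarith)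
  have hq2r1 : (0:ℝ) < qint x (2 * (r - 1) * mR) := qint_pos hx0 hx1 (by nlinarith)
  unfold sigmaj
  split_ifs
  · norm_num
  · apply div_neg_of_neg_of_pos
    · have := mul_pos hqm hq2r1; linarith
    · exact mul_pos hqr hqr1
  · apply div_neg_of_neg_of_pos
    · have := mul_pos hqr1 hq2m; linarith
    · exact mul_pos hqr hqm

lemma Ament_vanish (j l : ℕ) (h : j + 2 ≤ l ∨ l + 2 ≤ j) : Ament x r mR ε j l = 0 := by
  unfold Ament
  rw [if_neg (by omega), if_neg (by omega), if_neg (by omega)]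

lemma nPlus_zero : nPlus 0 ε = if ε 1 then 1 else 0 := by
  unfold nPlus
  rw [show (0:ℕ)+1 = 1 from rfl, Finset.Icc_self, Finset.filter_singleton]
  by_cases h : ε 1 <;> simp [h]

lemma nMinus_zero : nMinus 0 ε = if ε 1 then 0 else 1 := by
  unfold nMinus
  rw [show (0:ℕ)+1 = 1 from rfl, Finset.Icc_self, Finset.filter_singleton]
  by_cases h : ε 1 <;> simp [h]

lemma Fq_zero (hx0 : 0 < x) (hx1 : x < 1) (hr : 1 < r) (hm : 0 < mR) :
    Fq x r mR ε 0 = 1 := by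
  have hqm : (0:ℝ) < qint x mR := qint_pos hx0 hx1 hm
  have hqr1 : (0:ℝ) < qint x ((r - 1) * mR) := qint_pos hx0 hx1 (by nlinarith)
  unfold Fq
  rw [nPlus_zero, nMinus_zero]
  cases h : ε 1
  · simp only [if_false, Bool.false_eq_true]
    norm_num
    exact mul_inv_cancel₀ hqm.ne'
  · simp only [if_true]
    norm_num
    exact mul_inv_cancel₀ hqr1.ne'

lemma Fq_one (hx0 : 0 < x) (hx1 : x < 1) (hr : 1 < r) (hm : 0 < mR) :
    Fq x r mR ε 1 = qint x (r * mR) * sigmaj x r mR ε 1 := by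
  have hqm : (0:ℝ) < qint x mR := qint_pos hx0 hx1 hm
  have hqr1 : (0:ℝ) < qint x ((r - 1) * mR) := qint_pos hx0 hx1 (by nlinarith)
  have hqr : (0:ℝ) < qint x (r * mR) := qint_pos hx0 hx1 (by nlinarith)
  unfold Fq
  rw [show (1:ℕ) = 0 + 1 from rfl, nPlus_succ, nMinus_succ, nPlus_zero, nMinus_zero]
  cases h1 : ε 1 <;> cases h2 : ε (0 + 2) <;>
    simp only [sigmaj, gamj, h1, h2, if_true, if_false, ne_eq, Bool.false_eq_true, not_true,
      not_false_iff, Bool.true_eq_false] <;> norm_num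
  · field_simp
    rw [mul_div_cancel_right₀ _ (show qint x (mR * r) ≠ 0 by rw [mul_comm]; exact hqr.ne')]
  · rw [show (r-1) * 2 * mR = 2 * (r-1) * mR by ring]
    field_simp

end Main

section Main2
variable {x r mR : ℝ} {ε : ℕ → Bool}

lemma step_alg (F1 F0 qr s1 s2 g X Y : ℝ) (hqr : qr ≠ 0) (hs1 : s1 ≠ 0) (hs2 : s2 ≠ 0)
    (hX : X ≠ 0) (hY : Y ≠ 0) :
    F1 / (X * qr * (Y * s1)) - g / (qr * s2) * (g / (qr * s1)) * (F0 / (X * Y))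
      = (qr * s2 * F1 - g ^ 0 * g * g * F0) / (X * qr * qr * (Y * s1 * s2)) := by
  field_simp

lemma det_matAm (hx0 : 0 < x) (hx1 : x < 1) (hr : 1 < r) (hm : 0 < mR) (k : ℕ) :
    (matAm k x r mR ε).det
      = Fq x r mR ε k / (qint x (r * mR) ^ k * ∏ j ∈ Finset.Icc 1 k, sigmaj x r mR ε j) := by
  have hqr : (0:ℝ) < qint x (r * mR) := qint_pos hx0 hx1 (by nlinarith)
  have hsig : ∀ j, sigmaj x r mR ε j ≠ 0 := fun j => (sigmaj_neg hx0 hx1 hr hm j).ne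
  have hP : ∀ n, (∏ j ∈ Finset.Icc 1 n, sigmaj x r mR ε j) ≠ 0 :=
    fun n => Finset.prod_ne_zero_iff.mpr fun j _ => hsig j
  have key : ∀ n, (matAm n x r mR ε).det
        = Fq x r mR ε n / (qint x (r * mR) ^ n * ∏ j ∈ Finset.Icc 1 n, sigmaj x r mR ε j) ∧
      (matAm (n+1) x r mR ε).det
        = Fq x r mR ε (n+1) / (qint x (r * mR) ^ (n+1) *
            ∏ j ∈ Finset.Icc 1 (n+1), sigmaj x r mR ε j) := by
    intro n
    induction n with
    | zero =>
      constructor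
      · rw [show (matAm 0 x r mR ε).det = 1 from Matrix.det_fin_zero]
        rw [Fq_zero hx0 hx1 hr hm]
        rw [show Finset.Icc 1 0 = (∅ : Finset ℕ) from Finset.Icc_eq_empty (by omega)]
        simp
      · rw [show (matAm 1 x r mR ε).det = Ament x r mR ε 1 1 from Matrix.det_fin_one _]
        rw [show Ament x r mR ε 1 1 = 1 from if_pos rfl]
        rw [Fq_one hx0 hx1 hr hm, pow_one]
        rw [show Finset.Icc 1 1 = ({1} : Finset ℕ) from Finset.Icc_self 1,
          Finset.prod_singleton]
        rw [div_self (mul_ne_zero hqr.ne' (hsig 1))]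
    | succ n ih =>
      obtain ⟨ih0, ih1⟩ := ih
      refine ⟨ih1, ?_⟩
      have hm2 : (matAm (n+1+1) x r mR ε).det
          = Ament x r mR ε (n+2) (n+2) * (matAm (n+1) x r mR ε).det
            - Ament x r mR ε (n+1) (n+2) * Ament x r mR ε (n+2) (n+1)
              * (matAm n x r mR ε).det :=
        det_rec (Ament x r mR ε) (fun a b h => Ament_vanish a b h) n
      have e11 : Ament x r mR ε (n+2) (n+2) = 1 := if_pos rfl
      have e12 : Ament x r mR ε (n+1) (n+2)
          = gamj x r mR ε (n+2) / (qint x (r * mR) * sigmaj x r mR ε (n+2)) := by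
        unfold Ament
        rw [if_neg (by omega), if_pos (by omega)]
      have e21 : Ament x r mR ε (n+2) (n+1)
          = gamj x r mR ε (n+2) / (qint x (r * mR) * sigmaj x r mR ε (n+1)) := by
        unfold Ament
        rw [if_neg (by omega), if_neg (by omega), if_pos (by omega)]
      have hprod2 : (∏ j ∈ Finset.Icc 1 (n+1+1), sigmaj x r mR ε j)
          = (∏ j ∈ Finset.Icc 1 n, sigmaj x r mR ε j) * sigmaj x r mR ε (n+1)
            * sigmaj x r mR ε (n+2) := by
        rw [Finset.prod_Icc_succ_top (by omega), Finset.prod_Icc_succ_top (by omega)]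
      rw [hm2, e11, e12, e21, ih0, ih1, one_mul, hprod2,
        show (n+1+1) = n+2 from rfl, Frec x r mR hx0 hx1 hr hm ε n,
        Finset.prod_Icc_succ_top (by omega : 1 ≤ n+1)]
      simp only [pow_succ]
      generalize hX : qint x (r*mR) ^ n = X
      generalize hY : (∏ j ∈ Finset.Icc 1 n, sigmaj x r mR ε j) = Y
      have hX0 : X ≠ 0 := hX ▸ pow_ne_zero n hqr.ne'
      have hY0 : Y ≠ 0 := hY ▸ hP n
      exact step_alg _ _ _ _ _ _ _ _ hqr.ne' (hsig (n+1)) (hsig (n+2)) hX0 hY0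
  exact (key k).1

end Main2



/-- The `m ≠ 0` case of Lemma 3.12:
`det A(m) = (-1)^L [am]_x [(r-1)m]_x^{n₋-1} [m]_x^{n₊-1} / ([rm]_x^L ∏_j σ_j) ≠ 0`,
and, since `A(-m)` is the transpose of `A(m)`, the same formula holds for `A(-m)`. -/
theorem statement9 (L : ℕ) (hL : 1 ≤ L) (r x : ℝ) (hr : 1 < r) (hx0 : 0 < x) (hx1 : x < 1)
    (ε : ℕ → Bool) (m : ℕ) (hm : 1 ≤ m) :
    (matAm L x r (m : ℝ) ε).det = detVal L x r (m : ℝ) ε ∧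
      (matAm L x r (m : ℝ) ε).det ≠ 0 ∧
      ((matAm L x r (m : ℝ) ε).transpose).det = detVal L x r (m : ℝ) ε := by
  have hm' : (0:ℝ) < (m : ℝ) := by exact_mod_cast Nat.lt_of_lt_of_le Nat.zero_lt_one hm
  have hqm : (0:ℝ) < qint x (m:ℝ) := qint_pos hx0 hx1 hm'
  have hqr1 : (0:ℝ) < qint x ((r - 1) * (m:ℝ)) := qint_pos hx0 hx1 (by nlinarith)
  have hqr : (0:ℝ) < qint x (r * (m:ℝ)) := qint_pos hx0 hx1 (by nlinarith)
  have hdet := det_matAm (mR := (m:ℝ)) (ε := ε) hx0 hx1 hr hm' L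
  have hval : detVal L x r (m:ℝ) ε
      = Fq x r (m:ℝ) ε L / (qint x (r * (m:ℝ)) ^ L * ∏ j ∈ Finset.Icc 1 L, sigmaj x r (m:ℝ) ε j) :=
    rfl
  have h1 : (matAm L x r (m : ℝ) ε).det = detVal L x r (m : ℝ) ε := by
    rw [hdet, hval]
  have hFq : Fq x r (m:ℝ) ε L ≠ 0 := by
    have hpq : nPlus L ε + nMinus L ε = L + 1 := nPlus_add_nMinus ε L
    have ha : (0:ℝ) < ((r - 1) * (nPlus L ε : ℝ) + (nMinus L ε : ℝ)) * (m:ℝ) := by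
      apply mul_pos _ hm'
      rcases Nat.eq_zero_or_pos (nPlus L ε) with h | h
      · have h2 : nMinus L ε = L + 1 := by omega
        rw [h, h2]
        push_cast
        nlinarith
      · have h3 : (0:ℝ) < (r - 1) * (nPlus L ε : ℝ) := by
          apply mul_pos (by linarith)
          exact_mod_cast h
        have h4 : (0:ℝ) ≤ (nMinus L ε : ℝ) := Nat.cast_nonneg _
        linarith
    unfold Fq
    apply mul_ne_zero
    apply mul_ne_zero
    apply mul_ne_zero
    · exact pow_ne_zero _ (by norm_num)
    · exact (qint_pos hx0 hx1 ha).ne'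
    · exact zpow_ne_zero _ hqr1.ne'
    · exact zpow_ne_zero _ hqm.ne'
  have hden : (qint x (r * (m:ℝ)) ^ L * ∏ j ∈ Finset.Icc 1 L, sigmaj x r (m:ℝ) ε j) ≠ 0 :=
    mul_ne_zero (pow_ne_zero _ hqr.ne')
      (Finset.prod_ne_zero_iff.mpr fun j _ => (sigmaj_neg hx0 hx1 hr hm' j).ne)
  refine ⟨h1, ?_, ?_⟩
  · rw [h1, hval]
    exact div_ne_zero hFq hden
  · rw [Matrix.det_transpose]
    exact h1
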